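/- Let a > 0 and 0 < r < a be fixed real numbers. Then lim_{M → 0⁺} ∫_{3M}^r s·(1 − 2M/s − s²/a²)^(−3/2) ds = ∫_0^r s·(1 − s²/a²)^(−3/2) ds. -/

import Mathlib

open MeasureTheory Set Filter Real

/-- The limit as `M → 0⁺` of `∫_{3M}^r s·(1 - 2M/s - s²/a²)^(-3/2) ds` is
`∫_0^r s·(1 - s²/a²)^(-3/2) ds`, obtained by dominated convergence (closed, K = +1 case). -/
theorem mcvittie_integral_limit_massless_closed (a r : ℝ) (ha : 0 < a)
    (hr0 : 0 < r) (hra : r < a) :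
    Filter.Tendsto
      (fun M : ℝ => ∫ s in (3 * M)..r, s * (1 - 2 * M / s - s ^ 2 / a ^ 2) ^ (-(3 : ℝ) / 2))
      (nhdsWithin 0 (Set.Ioi 0))
      (nhds (∫ s in (0 : ℝ)..r, s * (1 - s ^ 2 / a ^ 2) ^ (-(3 : ℝ) / 2))) := by
  have hr2 : r ^ 2 / a ^ 2 < 1 := (div_lt_one (by positivity)).2 (by nlinarith)
  set ε : ℝ := 1 - r ^ 2 / a ^ 2 with hεdef
  have hε : 0 < ε := by simp [hεdef]; linarith
  set δ : ℝ := min (a / 3) r with hδdef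
  have hδ0 : 0 < δ := lt_min (by linarith) hr0
  set c : ℝ := min (2 / 9 : ℝ) (ε / 2) with hcdef
  have hc : 0 < c := lt_min (by norm_num) (by linarith)
  set m0 : ℝ := min (r / 3) (ε * δ / 4) with hm0def
  have hm0 : 0 < m0 := lt_min (by linarith) (by positivity)
  have hm0r : m0 ≤ r / 3 := min_le_left _ _
  -- key lower bound
  have key : ∀ M : ℝ, 0 < M → M < m0 → ∀ s ∈ Ioc (3 * M) r,
      c ≤ 1 - 2 * M / s - s ^ 2 / a ^ 2 := by
    intro M hM hMm s hs
    have hs0 : 0 < s := lt_trans (by linarith) hs.1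
    rcases le_or_gt s δ with h | h
    · have h1 : 2 * M / s < 2 / 3 := by
        rw [div_lt_iff₀ hs0]; nlinarith [hs.1]
      have h2 : s ^ 2 / a ^ 2 ≤ 1 / 9 := by
        have hsa : s ≤ a / 3 := h.trans (min_le_left _ _)
        rw [div_le_iff₀ (by positivity)]; nlinarith
      have h3 : c ≤ 2 / 9 := min_le_left _ _
      linarith
    · have hM4 : M ≤ ε * δ / 4 := hMm.le.trans (min_le_right _ _)
      have h1 : 2 * M / s ≤ ε / 2 := by
        rw [div_le_iff₀ hs0]; nlinarith
      have h2 : s ^ 2 / a ^ 2 ≤ 1 - ε := by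
        have hsr : s ^ 2 ≤ r ^ 2 := by nlinarith [hs.2]
        have : s ^ 2 / a ^ 2 ≤ r ^ 2 / a ^ 2 := by gcongr
        simpa [hεdef] using this
      have h3 : c ≤ ε / 2 := min_le_right _ _
      linarith
  have hmain : Tendsto
      (fun M : ℝ => ∫ s, (Ioc (3 * M) r).indicator
        (fun s => s * (1 - 2 * M / s - s ^ 2 / a ^ 2) ^ (-(3 : ℝ) / 2)) s)
      (nhdsWithin (0 : ℝ) (Ioi 0))
      (nhds (∫ s, (Ioc (0 : ℝ) r).indicator
        (fun s => s * (1 - s ^ 2 / a ^ 2) ^ (-(3 : ℝ) / 2)) s)) := by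
    apply tendsto_integral_filter_of_dominated_convergence
      ((Ioc (0 : ℝ) r).indicator (fun _ => r * c ^ (-(3 : ℝ) / 2)))
    · filter_upwards with M
      apply AEStronglyMeasurable.indicator _ measurableSet_Ioc
      apply Measurable.aestronglyMeasurable
      fun_prop
    · filter_upwards [self_mem_nhdsWithin,
        (gt_mem_nhds hm0).filter_mono nhdsWithin_le_nhds] with M hM hMm
      filter_upwards with s
      by_cases hs : s ∈ Ioc (3 * M) r
      · have hs0 : 0 < s := lt_trans (by simp only [mem_Ioi] at hM; linarith) hs.1
        have hsIoc : s ∈ Ioc (0 : ℝ) r := ⟨hs0, hs.2⟩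
        simp only [mem_Ioi] at hM
        rw [indicator_of_mem hs, indicator_of_mem hsIoc]
        have hκ : c ≤ 1 - 2 * M / s - s ^ 2 / a ^ 2 := key M hM hMm s hs
        have hκ0 : 0 < 1 - 2 * M / s - s ^ 2 / a ^ 2 := lt_of_lt_of_le hc hκ
        have hrpow : (1 - 2 * M / s - s ^ 2 / a ^ 2) ^ (-(3 : ℝ) / 2) ≤ c ^ (-(3 : ℝ) / 2) :=
          Real.rpow_le_rpow_of_nonpos hc hκ (by norm_num)
        rw [Real.norm_eq_abs, abs_of_nonneg (by positivity)]
        exact mul_le_mul hs.2 hrpow (by positivity) hr0.le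
      · rw [indicator_of_notMem hs, norm_zero]
        by_cases hs' : s ∈ Ioc (0 : ℝ) r
        · rw [indicator_of_mem hs']; positivity
        · rw [indicator_of_notMem hs']
    · rw [integrable_indicator_iff measurableSet_Ioc]
      exact integrableOn_const measure_Ioc_lt_top.ne
    · filter_upwards with s
      by_cases hs : s ∈ Ioc (0 : ℝ) r
      · rw [indicator_of_mem hs]
        have hs0 : 0 < s := hs.1
        have hbase0 : (0 : ℝ) < 1 - s ^ 2 / a ^ 2 := by
          have : s ^ 2 / a ^ 2 < 1 := by
            rw [div_lt_one (by positivity)]; nlinarith [hs.2]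
          linarith
        have hev : ∀ᶠ M in nhdsWithin (0 : ℝ) (Ioi 0),
            s * (1 - 2 * M / s - s ^ 2 / a ^ 2) ^ (-(3 : ℝ) / 2)
              = (Ioc (3 * M) r).indicator
                (fun s => s * (1 - 2 * M / s - s ^ 2 / a ^ 2) ^ (-(3 : ℝ) / 2)) s := by
          filter_upwards [(gt_mem_nhds (by linarith : (0:ℝ) < s / 3)).filter_mono
            nhdsWithin_le_nhds] with M hM
          have hmem : s ∈ Ioc (3 * M) r := ⟨by linarith, hs.2⟩
          exact (indicator_of_mem hmem
            (fun s => s * (1 - 2 * M / s - s ^ 2 / a ^ 2) ^ (-(3 : ℝ) / 2))).symm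
        apply Tendsto.congr' hev
        have hcont : Tendsto (fun M : ℝ => 1 - 2 * M / s - s ^ 2 / a ^ 2)
            (nhdsWithin (0 : ℝ) (Ioi 0)) (nhds (1 - s ^ 2 / a ^ 2)) := by
          have hC : Continuous fun M : ℝ => 1 - 2 * M / s - s ^ 2 / a ^ 2 :=
            (continuous_const.sub ((continuous_const.mul continuous_id).div_const s)).sub
              continuous_const
          have := (hC.tendsto 0).mono_left (nhdsWithin_le_nhds :
            nhdsWithin (0 : ℝ) (Ioi 0) ≤ nhds 0)
          simpa using this
        exact tendsto_const_nhds.mul (hcont.rpow_const (Or.inl (ne_of_gt hbase0)))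
      · rw [indicator_of_notMem hs]
        have hev : ∀ᶠ M in nhdsWithin (0 : ℝ) (Ioi 0),
            (0 : ℝ) = (Ioc (3 * M) r).indicator
              (fun s => s * (1 - 2 * M / s - s ^ 2 / a ^ 2) ^ (-(3 : ℝ) / 2)) s := by
          filter_upwards [self_mem_nhdsWithin] with M hM
          simp only [mem_Ioi] at hM
          rw [indicator_of_notMem]
          intro hmem
          exact hs (⟨lt_trans (by linarith) hmem.1, hmem.2⟩ : s ∈ Ioc (0 : ℝ) r)
        exact Tendsto.congr' hev tendsto_const_nhds
  have heq1 : (fun M : ℝ => ∫ s in (3 * M)..r,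
        s * (1 - 2 * M / s - s ^ 2 / a ^ 2) ^ (-(3 : ℝ) / 2))
      =ᶠ[nhdsWithin (0 : ℝ) (Ioi 0)] fun M => ∫ s, (Ioc (3 * M) r).indicator
        (fun s => s * (1 - 2 * M / s - s ^ 2 / a ^ 2) ^ (-(3 : ℝ) / 2)) s := by
    filter_upwards [self_mem_nhdsWithin,
      (gt_mem_nhds hm0).filter_mono nhdsWithin_le_nhds] with M hM hMm
    simp only [mem_Ioi] at hM
    rw [intervalIntegral.integral_of_le (by linarith : 3 * M ≤ r),
      ← integral_indicator measurableSet_Ioc]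
  have heq2 : (∫ s in (0 : ℝ)..r, s * (1 - s ^ 2 / a ^ 2) ^ (-(3 : ℝ) / 2))
      = ∫ s, (Ioc (0 : ℝ) r).indicator
        (fun s => s * (1 - s ^ 2 / a ^ 2) ^ (-(3 : ℝ) / 2)) s := by
    rw [intervalIntegral.integral_of_le hr0.le, ← integral_indicator measurableSet_Ioc]
  rw [heq2]
  exact Tendsto.congr' heq1.symm hmain
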